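/- Let f : [a,b] → ℝ be continuous, c ∈ [a,b], and suppose there is a finite set a ≤ t_j < t_{j+1} < … < t_ℓ ≤ b with the following properties: f([a,c]) is contained in the 2δ'-neighborhood of the interval [f(t_j), f(t_i)] and f([c,b]) is contained in the 2δ'-neighborhood of the interval [f(t_{i+1}), f(t_ℓ)], where the values f(t_j) < f(t_{j+1}) < … < f(t_ℓ) are strictly monotone and t_i ≤ c < t_{i+1}. Then the Lebesgue measure of f([a,c]) ∩ f([c,b]) is at most 4δ'. -/

import Mathlib

theorem stmt_8 (a b c : ℝ) (hac : a ≤ c) (hcb : c ≤ b)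
    (f : ℝ → ℝ) (hf : ContinuousOn f (Set.Icc a b))
    (δ : ℝ) (hδ : 0 < δ)
    (n : ℕ) (t : Fin (n + 1) → ℝ) (ht : StrictMono t)
    (htmem : ∀ j, t j ∈ Set.Icc a b)
    (hmono : StrictMono (f ∘ t))
    (i : Fin n)
    (hci : t i.castSucc ≤ c) (hci' : c < t i.succ)
    (h1 : f '' Set.Icc a c ⊆
      {y | ∃ z ∈ Set.Icc (f (t 0)) (f (t i.castSucc)), |y - z| ≤ 2 * δ})
    (h2 : f '' Set.Icc c b ⊆
      {y | ∃ z ∈ Set.Icc (f (t i.succ)) (f (t (Fin.last n))), |y - z| ≤ 2 * δ}) :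
    MeasureTheory.volume (f '' Set.Icc a c ∩ f '' Set.Icc c b)
      ≤ ENNReal.ofReal (4 * δ) := by
  have hsub : f '' Set.Icc a c ∩ f '' Set.Icc c b ⊆
      Set.Icc (f (t i.succ) - 2 * δ) (f (t i.castSucc) + 2 * δ) := by
    rintro y ⟨hy1, hy2⟩
    obtain ⟨z1, hz1, hd1⟩ := h1 hy1
    obtain ⟨z2, hz2, hd2⟩ := h2 hy2
    have hd1' := abs_le.mp hd1
    have hd2' := abs_le.mp hd2
    constructor
    · have := hz2.1; linarith [hd2'.1]
    · have := hz1.2; linarith [hd1'.2]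
  have hfi : f (t i.castSucc) < f (t i.succ) := hmono (Fin.castSucc_lt_succ : i.castSucc < i.succ)
  calc MeasureTheory.volume (f '' Set.Icc a c ∩ f '' Set.Icc c b)
      ≤ MeasureTheory.volume (Set.Icc (f (t i.succ) - 2 * δ) (f (t i.castSucc) + 2 * δ)) :=
        MeasureTheory.measure_mono hsub
    _ = ENNReal.ofReal ((f (t i.castSucc) + 2 * δ) - (f (t i.succ) - 2 * δ)) := by
        simp [Real.volume_Icc]
    _ ≤ ENNReal.ofReal (4 * δ) := ENNReal.ofReal_le_ofReal (by linarith)
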